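/- For every positive integer k and every vector field X on B_2 ⊂ ℝ², setting v_k(z) = Im(z^k), the quantity Q_k(X) := (X v_k)² − v_k·(Hess v_k)(X, X) is nonnegative, and moreover Q_k(X) ≥ (1/k)·(X v_k)². -/

import Mathlib

open Complex Real

/-- Directional derivative of `f : ℂ → ℝ` at `z` in direction `w`. -/
noncomputable def pd (w : ℂ) (f : ℂ → ℝ) (z : ℂ) : ℝ := fderiv ℝ f z w

/-- Laplacian. -/
noncomputable def lap (f : ℂ → ℝ) (z : ℂ) : ℝ :=
  pd 1 (pd 1 f) z + pd Complex.I (pd Complex.I f) z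

/-- Inner product of the gradients of `f` and `g` at `z`. -/
noncomputable def gradInner (f g : ℂ → ℝ) (z : ℂ) : ℝ :=
  pd 1 f z * pd 1 g z + pd Complex.I f z * pd Complex.I g z

/-- `|∇f|²` at `z`. -/
noncomputable def gradSq (f : ℂ → ℝ) (z : ℂ) : ℝ := gradInner f f z

/-- Hessian bilinear form of `f` at `z` evaluated on directions `X, Y`. -/
noncomputable def hess (f : ℂ → ℝ) (X Y : ℂ) (z : ℂ) : ℝ := pd Y (pd X f) z

/-- Sum of squares of the entries of the Hessian matrix of `f` at `z`. -/
noncomputable def hessSq (f : ℂ → ℝ) (z : ℂ) : ℝ :=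
  (hess f 1 1 z) ^ 2 + (hess f 1 Complex.I z) ^ 2 +
    (hess f Complex.I 1 z) ^ 2 + (hess f Complex.I Complex.I z) ^ 2

/-- The open disk of radius 2 centered at the origin. -/
def B2 : Set ℂ := Metric.ball 0 2

/-- Harmonic on a set: `C²` and the Laplacian vanishes there. -/
noncomputable def HarmOn (f : ℂ → ℝ) (s : Set ℂ) : Prop :=
  ContDiffOn ℝ 2 f s ∧ ∀ z ∈ s, lap f z = 0

/-- `v_k(z) = Im (z^k)`. -/
noncomputable def vk (k : ℕ) (z : ℂ) : ℝ := (z ^ k).im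


lemma natCast_mul_im' (n : ℕ) (w : ℂ) : ((n : ℂ) * w).im = n * w.im := by simp

lemma hasFDerivAt_vk (k : ℕ) (z : ℂ) :
    HasFDerivAt (vk k) (Complex.imCLM.comp
      (((1 : ℂ →L[ℂ] ℂ).smulRight ((k : ℂ) * z ^ (k - 1))).restrictScalars ℝ)) z :=
  Complex.imCLM.hasFDerivAt.comp z ((hasDerivAt_pow k z).hasFDerivAt.restrictScalars ℝ)

lemma fderiv_vk (k : ℕ) (z w : ℂ) :
    fderiv ℝ (vk k) z w = ((k : ℂ) * z ^ (k - 1) * w).im := by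
  rw [(hasFDerivAt_vk k z).fderiv]
  simp [mul_comm]

lemma fderiv_pd_vk (k : ℕ) (X z : ℂ) :
    fderiv ℝ (fun y => fderiv ℝ (vk k) y X) z X
      = ((k : ℂ) * ((k - 1 : ℕ) : ℂ) * z ^ (k - 1 - 1) * X * X).im := by
  have hfun : (fun y => fderiv ℝ (vk k) y X)
      = fun y => ((k : ℂ) * X * y ^ (k - 1)).im := by
    funext y; rw [fderiv_vk]; ring_nf
  rw [hfun]
  have hd : HasDerivAt (fun y : ℂ => (k : ℂ) * X * y ^ (k - 1))
      ((k : ℂ) * X * (((k - 1 : ℕ) : ℂ) * z ^ (k - 1 - 1))) z :=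
    (hasDerivAt_pow (k - 1) z).const_mul _
  have h2 : HasFDerivAt (fun y : ℂ => ((k : ℂ) * X * y ^ (k - 1)).im)
      (Complex.imCLM.comp (((1 : ℂ →L[ℂ] ℂ).smulRight
        ((k : ℂ) * X * (((k - 1 : ℕ) : ℂ) * z ^ (k - 1 - 1)))).restrictScalars ℝ)) z :=
    Complex.imCLM.hasFDerivAt.comp z (hd.hasFDerivAt.restrictScalars ℝ)
  rw [h2.fderiv]
  simp
  ring_nf

lemma key_ineq (p w q : ℂ) (h : q ^ 2 = p * w) : p.im * w.im ≤ q.im ^ 2 := by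
  have h1 : ‖q‖ ^ 2 = ‖p‖ * ‖w‖ := by
    rw [← norm_pow, h, norm_mul]
  have h2 : (p * (starRingEnd ℂ) w).re ≤ ‖p‖ * ‖w‖ := by
    calc (p * (starRingEnd ℂ) w).re ≤ ‖p * (starRingEnd ℂ) w‖ := Complex.re_le_norm _
    _ = ‖p‖ * ‖w‖ := by rw [norm_mul, Complex.norm_conj]
  have h3 : q.im ^ 2 = (‖q‖ ^ 2 - (q ^ 2).re) / 2 := by
    have e1 : (q ^ 2).re = q.re * q.re - q.im * q.im := by rw [sq, Complex.mul_re]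
    rw [Complex.sq_norm, Complex.normSq_apply, e1]; ring
  have h4 : (q ^ 2).re = p.re * w.re - p.im * w.im := by rw [h, Complex.mul_re]
  have h5 : (p * (starRingEnd ℂ) w).re = p.re * w.re + p.im * w.im := by
    simp [Complex.mul_re]
  nlinarith [h2]

lemma main_ineq (k : ℕ) (hk : 1 ≤ k) (x z : ℂ) :
    (1 / (k : ℝ)) * (((k : ℂ) * z ^ (k - 1) * x).im) ^ 2 ≤
      (((k : ℂ) * z ^ (k - 1) * x).im) ^ 2 -
        (z ^ k).im * (((k : ℂ) * ((k - 1 : ℕ) : ℂ) * z ^ (k - 1 - 1) * x * x).im) := by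
  rcases Nat.lt_or_ge k 2 with h2 | h2
  · interval_cases k
    · simp
  · obtain ⟨m, rfl⟩ : ∃ m, k = m + 2 := ⟨k - 2, by omega⟩
    set a : ℝ := (z ^ (m + 1) * x).im with ha
    have hD : (((m + 2 : ℕ) : ℂ) * z ^ (m + 2 - 1) * x).im = ((m + 2 : ℕ) : ℝ) * a := by
      have e1 : ((m + 2 : ℕ) : ℂ) * z ^ (m + 2 - 1) * x
          = ((m + 2 : ℕ) : ℂ) * (z ^ (m + 1) * x) := by norm_num; ring
      rw [e1, natCast_mul_im']
    have hq : (z ^ (m + 1) * x) ^ 2 = z ^ (m + 2) * (z ^ m * x * x) := by ring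
    have hAB := key_ineq _ _ _ hq
    rw [← ha] at hAB
    have hH : (((m + 2 : ℕ) : ℂ) * ((m + 2 - 1 : ℕ) : ℂ) * z ^ (m + 2 - 1 - 1) * x * x).im
        = ((m + 2 : ℕ) : ℝ) * ((m + 1 : ℕ) : ℝ) * (z ^ m * x * x).im := by
      have : ((m + 2 : ℕ) : ℂ) * ((m + 2 - 1 : ℕ) : ℂ) * z ^ (m + 2 - 1 - 1) * x * x
          = ((m + 2 : ℕ) : ℂ) * (((m + 1 : ℕ) : ℂ) * (z ^ m * x * x)) := by
        norm_num; ring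
      rw [this, natCast_mul_im', natCast_mul_im']; ring
    rw [hD, hH]
    set P : ℝ := (z ^ (m + 2)).im
    set W : ℝ := (z ^ m * x * x).im
    have hmn : (0 : ℝ) < ((m + 2 : ℕ) : ℝ) := by positivity
    have e : (1 / ((m + 2 : ℕ) : ℝ)) * (((m + 2 : ℕ) : ℝ) * a) ^ 2
        = ((m + 2 : ℕ) : ℝ) * a ^ 2 := by field_simp
    rw [e]
    have h5 : 0 ≤ ((m : ℝ) + 2) * ((m : ℝ) + 1) * (a ^ 2 - P * W) := by
      apply mul_nonneg (by positivity) (by linarith)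
    push_cast
    nlinarith [h5]

theorem stmt2 (k : ℕ) (hk : 1 ≤ k) (X : ℂ → ℂ) :
    ∀ z ∈ B2,
      0 ≤ (fderiv ℝ (vk k) z (X z)) ^ 2 - vk k z * hess (vk k) (X z) (X z) z ∧
      (1 / (k : ℝ)) * (fderiv ℝ (vk k) z (X z)) ^ 2 ≤
        (fderiv ℝ (vk k) z (X z)) ^ 2 - vk k z * hess (vk k) (X z) (X z) z := by
  intro z _
  have hD : fderiv ℝ (vk k) z (X z) = ((k : ℂ) * z ^ (k - 1) * X z).im := fderiv_vk k z (X z)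
  have hHe : hess (vk k) (X z) (X z) z
      = fderiv ℝ (fun y => fderiv ℝ (vk k) y (X z)) z (X z) := rfl
  have hH : hess (vk k) (X z) (X z) z
      = ((k : ℂ) * ((k - 1 : ℕ) : ℂ) * z ^ (k - 1 - 1) * X z * X z).im := by
    rw [hHe, fderiv_pd_vk]
  have hmain : (1 / (k : ℝ)) * (fderiv ℝ (vk k) z (X z)) ^ 2 ≤
      (fderiv ℝ (vk k) z (X z)) ^ 2 - vk k z * hess (vk k) (X z) (X z) z := by
    rw [hD, hH]
    exact main_ineq k hk (X z) z
  exact ⟨le_trans (by positivity) hmain, hmain⟩
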